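/- For each i with 0 ≤ i ≤ k, the function h_i(r_i, (p_j)_{j=0}^{i}) = r_i s_{i,k} + Σ_{j=0}^{i} p_j M_i/n_j, where 0 ≤ r_i < f_{i,k} and 0 ≤ p_j < v_{j,k}, takes pairwise distinct values modulo M_i, and these residues exhaust all integers from 0 to M_i − 1. -/

import Mathlib

private lemma divDivDiv {x y M : ℕ} (hxy : x ∣ y) (hyM : y ∣ M) (hM : 0 < M) :
    (M / x) / (M / y) = y / x := by
  obtain ⟨t, rfl⟩ := hxy
  obtain ⟨m, rfl⟩ := hyM
  have hx : 0 < x := Nat.pos_of_ne_zero fun h => by simp [h] at hM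
  have hm : 0 < m := Nat.pos_of_ne_zero fun h => by simp [h] at hM
  rw [show x * t * m / x = t * m by rw [Nat.mul_assoc, Nat.mul_div_cancel_left _ hx],
    Nat.mul_div_cancel_left _ (Nat.pos_of_ne_zero fun h => by simp [h] at hM : 0 < x * t),
    Nat.mul_div_cancel _ hm, Nat.mul_div_cancel_left _ hx]

private lemma divDvdDiv {x y M : ℕ} (hxy : x ∣ y) (hyM : y ∣ M) : M / y ∣ M / x := by
  obtain ⟨t, rfl⟩ := hxy
  obtain ⟨m, rfl⟩ := hyM
  rcases Nat.eq_zero_or_pos x with rfl | hx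
  · simp
  · rcases Nat.eq_zero_or_pos t with rfl | ht
    · simp
    · rw [show x * t * m / x = t * m by rw [Nat.mul_assoc, Nat.mul_div_cancel_left _ hx],
        Nat.mul_div_cancel_left _ (Nat.mul_pos hx ht)]
      exact dvd_mul_left m t

private lemma gcdDivDiv {x y M : ℕ} (hM : 0 < M) (hx : x ∣ M) (hy : y ∣ M) :
    Nat.gcd (M / x) (M / y) = M / Nat.lcm x y := by
  have hl : Nat.lcm x y ∣ M := Nat.lcm_dvd hx hy
  apply Nat.dvd_antisymm
  · set d := Nat.gcd (M / x) (M / y) with hd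
    have hdM : d ∣ M := (Nat.gcd_dvd_left _ _).trans (Nat.div_dvd_of_dvd hx)
    have hxd : x ∣ M / d := (Nat.dvd_div_iff_mul_dvd hdM).2 <| by
      rw [Nat.mul_comm]
      exact (Nat.dvd_div_iff_mul_dvd hx).1 (Nat.gcd_dvd_left _ _)
    have hyd : y ∣ M / d := (Nat.dvd_div_iff_mul_dvd hdM).2 <| by
      rw [Nat.mul_comm]
      exact (Nat.dvd_div_iff_mul_dvd hy).1 (Nat.gcd_dvd_right _ _)
    exact (Nat.dvd_div_iff_mul_dvd hl).2 <| by
      rw [Nat.mul_comm]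
      exact (Nat.dvd_div_iff_mul_dvd hdM).1 (Nat.lcm_dvd hxd hyd)
  · exact Nat.dvd_gcd (divDvdDiv (Nat.dvd_lcm_left _ _) hl) (divDvdDiv (Nat.dvd_lcm_right _ _) hl)


private lemma stepA {M a g : ℕ} (hM : 0 < M) (ha : a ∣ M) (hg : g ∣ M) :
    Set.BijOn (fun x : ℕ × ℕ => (x.1 + x.2 * g) % M)
      ({m | m < M ∧ a ∣ m} ×ˢ Set.Iio (a / Nat.gcd a g))
      {m | m < M ∧ Nat.gcd a g ∣ m} := by
  set e := Nat.gcd a g with he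
  set v := a / e with hvdef
  have ha0 : 0 < a := Nat.pos_of_dvd_of_pos ha hM
  have hg0 : 0 < g := Nat.pos_of_dvd_of_pos hg hM
  have he0 : 0 < e := Nat.gcd_pos_of_pos_left _ ha0
  have hea : e ∣ a := Nat.gcd_dvd_left _ _
  have heg : e ∣ g := Nat.gcd_dvd_right _ _
  have heM : e ∣ M := hea.trans ha
  have hv0 : 0 < v := Nat.div_pos (Nat.le_of_dvd ha0 hea) he0
  have hev : e * v = a := Nat.mul_div_cancel' hea
  refine ⟨?_, ?_, ?_⟩
  · rintro ⟨m, p⟩ ⟨⟨hm, ham⟩, hp⟩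
    exact ⟨Nat.mod_lt _ hM, (Nat.dvd_mod_iff heM).2
      (dvd_add (hea.trans ham) (Dvd.dvd.mul_left heg p))⟩
  · rintro ⟨m₁, p₁⟩ ⟨⟨hm₁, ham₁⟩, hp₁⟩ ⟨m₂, p₂⟩ ⟨⟨hm₂, ham₂⟩, hp₂⟩ heq
    simp only [Set.mem_Iio] at hp₁ hp₂
    have hmodM : m₁ + p₁ * g ≡ m₂ + p₂ * g [MOD M] := heq
    have hmoda : m₁ + p₁ * g ≡ m₂ + p₂ * g [MOD a] := hmodM.of_dvd ha
    have hmm : m₁ ≡ m₂ [MOD a] :=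
      ((Nat.modEq_zero_iff_dvd).2 ham₁).trans ((Nat.modEq_zero_iff_dvd).2 ham₂).symm
    have hpg : g * p₁ ≡ g * p₂ [MOD a] := by
      have := hmm.add_left_cancel hmoda
      rwa [Nat.mul_comm p₁, Nat.mul_comm p₂] at this
    have hpp : p₁ ≡ p₂ [MOD v] := by
      have := hpg.cancel_left_div_gcd ha0
      rwa [← he] at this
    have hp12 : p₁ = p₂ := by
      have := hpp
      unfold Nat.ModEq at this
      rwa [Nat.mod_eq_of_lt hp₁, Nat.mod_eq_of_lt hp₂] at this
    subst hp12
    have : m₁ = m₂ := by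
      have := (Nat.ModEq.add_right_cancel' _ hmodM)
      unfold Nat.ModEq at this
      rwa [Nat.mod_eq_of_lt hm₁, Nat.mod_eq_of_lt hm₂] at this
    simp [this]
  · rintro m ⟨hm, hem⟩
    -- find p < v with p * g ≡ m [MOD a]
    have : NeZero v := ⟨hv0.ne'⟩
    have hcop : Nat.Coprime (g / e) v := by
      rw [hvdef, he, Nat.gcd_comm a g]
      exact Nat.coprime_div_gcd_div_gcd (Nat.gcd_pos_of_pos_left a hg0)
    set u := ZMod.unitOfCoprime _ hcop with hu
    set p := ((m / e : ZMod v) * ↑u⁻¹).val with hpdef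
    have hp : p < v := ZMod.val_lt _
    have hkey : p * (g / e) ≡ m / e [MOD v] := by
      have : ((p * (g / e) : ℕ) : ZMod v) = ((m / e : ℕ) : ZMod v) := by
        push_cast
        rw [hpdef, ZMod.natCast_val, ZMod.cast_id]
        have hgu : ((g / e : ℕ) : ZMod v) = (u : ZMod v) := (ZMod.coe_unitOfCoprime _ hcop).symm
        rw [hgu, mul_assoc, Units.inv_mul, mul_one]
      exact (ZMod.natCast_eq_natCast_iff _ _ _).1 this
    have hpg : p * g ≡ m [MOD a] := by
      have := hkey.mul_left' e
      rwa [hev, Nat.mul_left_comm, Nat.mul_div_cancel' heg, Nat.mul_comm e,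
        Nat.div_mul_cancel hem] at this
    have hle : p * g ≤ a * M :=
      Nat.mul_le_mul (le_of_lt (lt_of_lt_of_le hp (Nat.div_le_self _ _))) (Nat.le_of_dvd hM hg)
    have hle' : p * g ≤ m + a * M := le_trans hle (Nat.le_add_left _ _)
    refine ⟨((m + a * M - p * g) % M, p), ⟨⟨Nat.mod_lt _ hM, ?_⟩, hp⟩, ?_⟩
    · refine (Nat.dvd_mod_iff ha).2 ?_
      refine (Nat.modEq_iff_dvd' hle').1 ?_
      calc p * g ≡ m [MOD a] := hpg
        _ ≡ m + a * M [MOD a] := by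
            unfold Nat.ModEq
            simp [Nat.add_mul_mod_self_left]
    · show ((m + a * M - p * g) % M + p * g) % M = m
      rw [Nat.mod_add_mod, Nat.sub_add_cancel hle', Nat.add_mul_mod_self_right,
        Nat.mod_eq_of_lt hm]


private lemma mainL (M : ℕ) (hM : 0 < M) (a : ℕ) (ha : a ∣ M) (g : ℕ → ℕ) (A : ℕ → ℕ)
    (hA0 : A 0 = a) :
    ∀ n, (∀ j < n, g j ∣ M) → (∀ j < n, A (j + 1) = Nat.gcd (A j) (g j)) →
    Set.BijOn (fun x : ℕ × (ℕ → ℕ) =>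
        (x.1 * a + ∑ j ∈ Finset.range n, x.2 j * g j) % M)
      {x | x.1 < M / a ∧ (∀ j < n, x.2 j < A j / A (j + 1)) ∧ ∀ j, n ≤ j → x.2 j = 0}
      {m | m < M ∧ A n ∣ m} := by
  have ha0 : 0 < a := Nat.pos_of_dvd_of_pos ha hM
  intro n
  induction n with
  | zero =>
    intro _ _
    refine ⟨?_, ?_, ?_⟩
    · rintro ⟨r, p⟩ ⟨hr, -, -⟩
      dsimp only at hr ⊢
      have : r * a < M :=
        lt_of_lt_of_le ((Nat.mul_lt_mul_right ha0).2 hr) (Nat.div_mul_le_self _ _)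
      simp only [Finset.range_zero, Finset.sum_empty, Nat.add_zero, hA0]
      exact ⟨by rwa [Nat.mod_eq_of_lt this], by
        rw [Nat.mod_eq_of_lt this]; exact dvd_mul_left a r⟩
    · rintro ⟨r₁, p₁⟩ ⟨hr₁, -, hz₁⟩ ⟨r₂, p₂⟩ ⟨hr₂, -, hz₂⟩ heq
      dsimp only at *
      simp only [Finset.range_zero, Finset.sum_empty, Nat.add_zero] at heq
      have h₁ : r₁ * a < M :=
        lt_of_lt_of_le ((Nat.mul_lt_mul_right ha0).2 hr₁) (Nat.div_mul_le_self _ _)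
      have h₂ : r₂ * a < M :=
        lt_of_lt_of_le ((Nat.mul_lt_mul_right ha0).2 hr₂) (Nat.div_mul_le_self _ _)
      rw [Nat.mod_eq_of_lt h₁, Nat.mod_eq_of_lt h₂] at heq
      have : r₁ = r₂ := Nat.eq_of_mul_eq_mul_right ha0 heq
      refine Prod.ext this (funext fun j => ?_)
      show p₁ j = p₂ j
      rw [hz₁ j (Nat.zero_le _), hz₂ j (Nat.zero_le _)]
    · rintro m ⟨hm, ham⟩
      rw [hA0] at ham
      refine ⟨(m / a, fun _ => 0), ⟨Nat.div_lt_div_of_lt_of_dvd ha hm,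
        fun j h => absurd h (Nat.not_lt_zero j), fun j _ => rfl⟩, ?_⟩
      simp [Nat.div_mul_cancel ham, Nat.mod_eq_of_lt hm]
  | succ n IH =>
    intro hg hAs
    have hgn : g n ∣ M := hg n (Nat.lt_succ_self n)
    have hAdvd : ∀ j ≤ n, A j ∣ a := by
      intro j hj
      induction j with
      | zero => rw [hA0]
      | succ t IHt =>
        rw [hAs t (by omega)]
        exact (Nat.gcd_dvd_left _ _).trans (IHt (by omega))
    have hAnM : A n ∣ M := (hAdvd n le_rfl).trans ha
    have IH' := IH (fun j hj => hg j (by omega)) (fun j hj => hAs j (by omega))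
    have hstep := stepA hM hAnM hgn
    rw [← hAs n (Nat.lt_succ_self n)] at hstep
    have hΦ : Set.BijOn
        (fun x : ℕ × (ℕ → ℕ) =>
          (((x.1 * a + ∑ j ∈ Finset.range n, (Function.update x.2 n 0) j * g j) % M), x.2 n))
        {x | x.1 < M / a ∧ (∀ j < n + 1, x.2 j < A j / A (j + 1)) ∧ ∀ j, n + 1 ≤ j → x.2 j = 0}
        ({m | m < M ∧ A n ∣ m} ×ˢ Set.Iio (A n / A (n + 1))) := by
      have hmem : ∀ x : ℕ × (ℕ → ℕ),
          x ∈ {x : ℕ × (ℕ → ℕ) | x.1 < M / a ∧ (∀ j < n + 1, x.2 j < A j / A (j + 1)) ∧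
            ∀ j, n + 1 ≤ j → x.2 j = 0} →
          (x.1, Function.update x.2 n 0) ∈ {x : ℕ × (ℕ → ℕ) | x.1 < M / a ∧
            (∀ j < n, x.2 j < A j / A (j + 1)) ∧ ∀ j, n ≤ j → x.2 j = 0} := by
        rintro ⟨r, p⟩ ⟨hr, hb, hz⟩
        dsimp only at *
        refine ⟨hr, fun j hj => ?_, fun j hj => ?_⟩
        · show Function.update p n 0 j < A j / A (j + 1)
          rw [Function.update_of_ne (Nat.ne_of_lt hj)]
          exact hb j (by omega)
        · show Function.update p n 0 j = 0
          rcases Nat.eq_or_lt_of_le hj with rfl | hj'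
          · exact Function.update_self _ _ _
          · rw [Function.update_of_ne (Nat.ne_of_gt hj')]
            exact hz j hj'
      refine ⟨?_, ?_, ?_⟩
      · rintro x hx
        refine Set.mk_mem_prod (IH'.mapsTo (hmem x hx)) ?_
        exact hx.2.1 n (Nat.lt_succ_self n)
      · rintro x hx y hy heq
        simp only [Prod.mk.injEq] at heq
        have h1 := IH'.injOn (hmem x hx) (hmem y hy) heq.1
        simp only [Prod.mk.injEq] at h1
        refine Prod.ext h1.1 (funext fun j => ?_)
        rcases eq_or_ne j n with rfl | hj
        · exact heq.2
        · have := congrFun h1.2 j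
          rwa [Function.update_of_ne hj, Function.update_of_ne hj] at this
      · rintro ⟨m, q⟩ ⟨hmS, hq⟩
        obtain ⟨⟨r, p⟩, hy, hFy⟩ := IH'.surjOn hmS
        obtain ⟨hr, hb, hz⟩ := hy
        dsimp only at *
        refine ⟨(r, Function.update p n q), ⟨hr, fun j hj => ?_, fun j hj => ?_⟩, ?_⟩
        · dsimp only
          rcases eq_or_ne j n with rfl | hjn
          · rwa [Function.update_self]
          · rw [Function.update_of_ne hjn]
            exact hb j (by omega)
        · dsimp only
          rw [Function.update_of_ne (by omega : j ≠ n)]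
          exact hz j (by omega)
        · have hup : Function.update (Function.update p n q) n 0 = p := by
            rw [Function.update_idem]
            funext j
            rcases eq_or_ne j n with rfl | hjn
            · rw [Function.update_self]
              exact (hz j le_rfl).symm
            · rw [Function.update_of_ne hjn]
          show (_, _) = (m, q)
          dsimp only
          rw [hup, Function.update_self]
          exact Prod.ext hFy rfl
    have hcomp := hstep.comp hΦ
    refine hcomp.congr ?_
    rintro ⟨r, p⟩ ⟨hr, hb, hz⟩
    show ((r * a + ∑ j ∈ Finset.range n, (Function.update p n 0) j * g j) % M + p n * g n) % M
        = (r * a + ∑ j ∈ Finset.range (n + 1), p j * g j) % M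
    have hsum : ∑ j ∈ Finset.range n, (Function.update p n 0) j * g j
        = ∑ j ∈ Finset.range n, p j * g j := by
      refine Finset.sum_congr rfl fun j hj => ?_
      rw [Function.update_of_ne (Nat.ne_of_lt (Finset.mem_range.1 hj))]
    rw [hsum, Nat.mod_add_mod, Finset.sum_range_succ, Nat.add_assoc]



/-- The residues of `h_i(r_i, (p_j)) = r_i s_{i,k} + Σ_{j≤i} p_j M_i/n_j` modulo `M_i`,
for `0 ≤ r_i < f_{i,k} = gcd(M_i, n_k)` and `0 ≤ p_j < v_{j,k}`, are pairwise distinct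
and exhaust `{0,…,M_i−1}`. -/
theorem stmt12 (K k i : ℕ) (hik : i ≤ k) (hk : k ≤ K)
    (nr : ℕ → ℕ) (hnr : ∀ j ≤ K, 0 < nr j)
    (Mf : ℕ → ℕ) (hMf : ∀ j, Mf j = Finset.lcm (Finset.range (j + 1)) nr)
    (fgcd : ℕ → ℕ) (hf : ∀ j, fgcd j = Nat.gcd (Mf j) (nr k))
    (s : ℕ → ℕ) (hs : ∀ j, s j = Mf j / fgcd j)
    (v : ℕ → ℕ) (hv0 : v 0 = s 0) (hv : ∀ j, v (j + 1) = s (j + 1) / s j) :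
    Set.BijOn
      (fun x : ℕ × (ℕ → ℕ) =>
        (x.1 * s i + ∑ j ∈ Finset.range (i + 1), x.2 j * (Mf i / nr j)) % Mf i)
      {x | x.1 < fgcd i ∧ (∀ j ≤ i, x.2 j < v j) ∧ ∀ j, i < j → x.2 j = 0}
      (Set.Iio (Mf i)) := by
  have hMpos : ∀ j ≤ K, 0 < Mf j := by
    intro j hj
    rw [hMf]
    refine Nat.pos_of_ne_zero fun h0 => ?_
    obtain ⟨t, ht, h⟩ := (Set.mem_image _ _ _).1 (Finset.lcm_eq_zero_iff.1 h0)
    have ht' : t < j + 1 := Finset.mem_range.1 ht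
    exact (hnr t (by omega)).ne' h
  have hM : 0 < Mf i := hMpos i (by omega)
  have hMdvd : ∀ j ≤ i, Mf j ∣ Mf i := by
    intro j hj
    rw [hMf j, hMf i]
    exact Finset.lcm_dvd fun t ht =>
      Finset.dvd_lcm (Finset.mem_range.2 (by have := Finset.mem_range.1 ht; omega))
  have hnrd : ∀ j ≤ i, nr j ∣ Mf i := by
    intro j hj
    rw [hMf i]
    exact Finset.dvd_lcm (Finset.mem_range.2 (by omega))
  have hfdvd : fgcd i ∣ Mf i := by rw [hf]; exact Nat.gcd_dvd_left _ _
  have hfpos : 0 < fgcd i := Nat.pos_of_dvd_of_pos ?hfd hM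
  case hfd => exact hfdvd
  have hsidvd : s i ∣ Mf i := by rw [hs]; exact Nat.div_dvd_of_dvd hfdvd
  have hfj : ∀ j ≤ i, fgcd j ∣ Mf j := fun j _ => by rw [hf]; exact Nat.gcd_dvd_left _ _
  -- closed form for A
  set A : ℕ → ℕ := fun j => Nat.rec (s i) (fun t At => Nat.gcd At (Mf i / nr t)) j with hA
  have hArec : ∀ j, A (j + 1) = Nat.gcd (A j) (Mf i / nr j) := fun j => rfl
  have hMf0 : Mf 0 = nr 0 := by rw [hMf]; simp
  have hMfsucc : ∀ j, Mf (j + 1) = Nat.lcm (Mf j) (nr (j + 1)) := by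
    intro j
    rw [hMf (j + 1), hMf j, Finset.range_add_one, Finset.lcm_insert, Nat.lcm_comm]
    rfl
  have hgcdfj : ∀ j ≤ i, Nat.gcd (fgcd i) (Mf j) = fgcd j := by
    intro j hj
    rw [hf i, hf j, Nat.gcd_comm (Nat.gcd (Mf i) (nr k)) (Mf j), ← Nat.gcd_assoc,
      Nat.gcd_eq_left (hMdvd j hj)]
  have hlcmf : ∀ j ≤ i, Nat.lcm (fgcd i) (Mf j) = fgcd i * s j := by
    intro j hj
    rw [Nat.lcm, hgcdfj j hj, Nat.mul_div_assoc _ (hfj j hj), ← hs]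
  have hlcmdvd : ∀ j ≤ i, Nat.lcm (fgcd i) (Mf j) ∣ Mf i :=
    fun j hj => Nat.lcm_dvd hfdvd (hMdvd j hj)
  have hAcl : ∀ j ≤ i, A (j + 1) = Mf i / Nat.lcm (fgcd i) (Mf j) := by
    intro j hj
    induction j with
    | zero =>
      rw [hArec 0, hA]
      show Nat.gcd (s i) (Mf i / nr 0) = _
      rw [hs i, gcdDivDiv hM hfdvd (hnrd 0 (by omega)), hMf0]
    | succ t IHt =>
      rw [hArec (t + 1), IHt (by omega),
        gcdDivDiv hM (hlcmdvd t (by omega)) (hnrd (t + 1) hj),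
        Nat.lcm_assoc, ← hMfsucc]
  have hAfin : A (i + 1) = 1 := by
    rw [hAcl i le_rfl, Nat.dvd_antisymm (Nat.lcm_dvd hfdvd dvd_rfl) (Nat.dvd_lcm_right _ _),
      Nat.div_self hM]
  have hA0' : A 0 = Mf i / fgcd i := by show s i = _; rw [hs]
  have hdivb : ∀ j ≤ i, A j / A (j + 1) = v j := by
    intro j hj
    match j with
    | 0 =>
      rw [hAcl 0 hj, hA0', hlcmf 0 hj,
        divDivDiv (dvd_mul_right _ _) (hlcmf 0 hj ▸ hlcmdvd 0 hj) hM,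
        Nat.mul_div_cancel_left _ hfpos, hv0]
    | (t + 1) =>
      have hMt : Mf t ∣ Mf (t + 1) := by
        rw [hMfsucc t]; exact Nat.dvd_lcm_left _ _
      have h1 : Nat.lcm (fgcd i) (Mf t) ∣ Nat.lcm (fgcd i) (Mf (t + 1)) :=
        Nat.lcm_dvd (Nat.dvd_lcm_left _ _) (hMt.trans (Nat.dvd_lcm_right _ _))
      rw [hAcl t (by omega), hAcl (t + 1) hj,
        divDivDiv h1 (hlcmdvd (t + 1) hj) hM, hlcmf (t + 1) hj, hlcmf t (by omega),
        Nat.mul_div_mul_left _ _ hfpos, hv t]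
  have key := mainL (Mf i) hM (s i) hsidvd (fun j => Mf i / nr j) A rfl (i + 1)
    (fun j hj => Nat.div_dvd_of_dvd (hnrd j (by omega))) (fun j _ => hArec j)
  have hMA0 : Mf i / s i = fgcd i := by
    rw [hs, Nat.div_div_self hfdvd hM.ne']
  have hdom : {x : ℕ × (ℕ → ℕ) | x.1 < Mf i / s i ∧ (∀ j < i + 1, x.2 j < A j / A (j + 1)) ∧
      ∀ j, i + 1 ≤ j → x.2 j = 0}
      = {x : ℕ × (ℕ → ℕ) | x.1 < fgcd i ∧ (∀ j ≤ i, x.2 j < v j) ∧ ∀ j, i < j → x.2 j = 0} := by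
    ext ⟨r, p⟩
    simp only [Set.mem_setOf_eq, hMA0]
    constructor
    · rintro ⟨h1, h2, h3⟩
      exact ⟨h1, fun j hj => by rw [← hdivb j hj]; exact h2 j (by omega),
        fun j hj => h3 j (by omega)⟩
    · rintro ⟨h1, h2, h3⟩
      exact ⟨h1, fun j hj => by rw [hdivb j (by omega)]; exact h2 j (by omega),
        fun j hj => h3 j (by omega)⟩
  have htgt : {m | m < Mf i ∧ A (i + 1) ∣ m} = Set.Iio (Mf i) := by
    ext m; simp [hAfin]
  rw [hdom, htgt] at key
  exact key
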